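/- A subgroup Y of the restricted direct product G = ∏'_ν G_ν has compact closure in G if and only if there exists a family (K_ν)_ν with each K_ν a compact subset of G_ν and K_ν = H_ν for all but finitely many ν such that Y ⊆ ∏_ν K_ν. -/

import Mathlib

/-!
STATEMENT 1: A subgroup `Y` of the restricted direct product `G = ∏'_ν G_ν` (of locally
compact Hausdorff groups `G_ν` with respect to the compact open subgroups `H_ν`, `ν ∉ I∞`)
has compact closure in `G` if and only if there exists a family `(K_ν)_ν` with each `K_ν` a
compact subset of `G_ν` and `K_ν = H_ν` for all but finitely many `ν`, such that
`Y ⊆ ∏_ν K_ν`.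
-/

open Filter Topology

/-- The restricted direct product of the groups `G ν` with respect to the
subgroups `H ν`, as a subgroup of the full direct product. -/
def restrictedSubgroup {I : Type*} (G : I → Type*) [∀ ν, Group (G ν)]
    (H : ∀ ν, Subgroup (G ν)) : Subgroup (∀ ν, G ν) where
  carrier := {x | ∀ᶠ ν in Filter.cofinite, x ν ∈ H ν}
  one_mem' := by
    simp only [Set.mem_setOf_eq]
    exact Filter.Eventually.of_forall fun ν => (H ν).one_mem
  mul_mem' := fun {a b} hx hy => by
    simp only [Set.mem_setOf_eq] at hx hy ⊢
    filter_upwards [hx, hy] with ν h1 h2 using (H ν).mul_mem h1 h2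
  inv_mem' := fun {a} hx => by
    simp only [Set.mem_setOf_eq] at hx ⊢
    filter_upwards [hx] with ν h using (H ν).inv_mem h

/-- The restricted direct product, as a type. -/
def RestrictedProduct' {I : Type*} (G : I → Type*) [∀ ν, Group (G ν)]
    (H : ∀ ν, Subgroup (G ν)) : Type _ :=
  ↥(restrictedSubgroup G H)

instance {I : Type*} (G : I → Type*) [∀ ν, Group (G ν)] (H : ∀ ν, Subgroup (G ν)) :
    Group (RestrictedProduct' G H) :=
  inferInstanceAs (Group ↥(restrictedSubgroup G H))

/-- The underlying family of an element of the restricted direct product. -/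
def RestrictedProduct'.toPi {I : Type*} {G : I → Type*} [∀ ν, Group (G ν)]
    {H : ∀ ν, Subgroup (G ν)} (x : RestrictedProduct' G H) : ∀ ν, G ν :=
  x.1

/-- Auxiliary constructor for the restricted direct product. -/
def RestrictedProduct'.mk' {I : Type*} {G : I → Type*} [∀ ν, Group (G ν)]
    {H : ∀ ν, Subgroup (G ν)} (x : ∀ ν, G ν)
    (hx : ∀ᶠ ν in Filter.cofinite, x ν ∈ H ν) : RestrictedProduct' G H :=
  ⟨x, hx⟩

theorem restrictedProduct_subgroup_compactClosure_iff {I : Type*} (Iinf : Set I)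
    (hIinf : Iinf.Finite)
    (G : I → Type*) [∀ ν, Group (G ν)] [∀ ν, TopologicalSpace (G ν)]
    [∀ ν, IsTopologicalGroup (G ν)] [∀ ν, LocallyCompactSpace (G ν)] [∀ ν, T2Space (G ν)]
    (H : ∀ ν, Subgroup (G ν))
    (hHcompact : ∀ ν ∉ Iinf, IsCompact (H ν : Set (G ν)))
    (hHopen : ∀ ν ∉ Iinf, IsOpen (H ν : Set (G ν)))
    [TopologicalSpace (RestrictedProduct' G H)]
    [IsTopologicalGroup (RestrictedProduct' G H)]
    (hbasis : (nhds (1 : RestrictedProduct' G H)).HasBasis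
      (fun N : ∀ ν, Set (G ν) =>
        (∀ ν, IsOpen (N ν) ∧ (1 : G ν) ∈ N ν) ∧
          ∀ᶠ ν in Filter.cofinite, N ν = (H ν : Set (G ν)))
      (fun N => {x : RestrictedProduct' G H | ∀ ν, x.toPi ν ∈ N ν}))
    (Y : Subgroup (RestrictedProduct' G H)) :
    IsCompact (closure (Y : Set (RestrictedProduct' G H))) ↔
      ∃ K : ∀ ν, Set (G ν), (∀ ν, IsCompact (K ν)) ∧
        (∀ᶠ ν in Filter.cofinite, K ν = (H ν : Set (G ν))) ∧
        ∀ y ∈ Y, ∀ ν, y.toPi ν ∈ K ν := by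
  
  classical
  haveI : T2Space (RestrictedProduct' G H) := by
    apply IsTopologicalGroup.t2Space_of_one_sep
    intro x hx
    obtain ⟨ν₀, hν₀⟩ : ∃ ν, x.toPi ν ≠ 1 := by
      by_contra h
      push_neg at h
      exact hx (Subtype.ext (funext h))
    set N : ∀ ν, Set (G ν) := fun ν =>
      if h : ν = ν₀ then {h ▸ x.toPi ν₀}ᶜ else if ν ∈ Iinf then Set.univ else (H ν : Set (G ν))
      with hNdef
    refine ⟨{y : RestrictedProduct' G H | ∀ ν, y.toPi ν ∈ N ν}, hbasis.mem_of_mem ⟨?_, ?_⟩, ?_⟩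
    · intro ν
      by_cases h : ν = ν₀
      · subst h
        simp only [hNdef, dif_pos rfl]
        exact ⟨isOpen_compl_singleton, by simpa using hν₀.symm⟩
      · by_cases h2 : ν ∈ Iinf
        · simp only [hNdef, dif_neg h, if_pos h2]
          exact ⟨isOpen_univ, Set.mem_univ _⟩
        · simp only [hNdef, dif_neg h, if_neg h2]
          exact ⟨hHopen ν h2, (H ν).one_mem⟩
    · filter_upwards [hIinf.eventually_cofinite_notMem,
        (Set.finite_singleton ν₀).eventually_cofinite_notMem] with ν h1 h2
      have h2' : ν ≠ ν₀ := by simpa using h2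
      simp only [hNdef, dif_neg h2', if_neg h1]
    · intro hmem
      have := hmem ν₀
      simp only [hNdef, dif_pos rfl] at this
      exact this rfl
  constructor
  · intro hc
    choose C hCc hCn using fun ν => exists_compact_mem_nhds (1 : G ν)
    set N : ∀ ν, Set (G ν) := fun ν =>
      if ν ∈ Iinf then interior (C ν) else (H ν : Set (G ν)) with hNdef
    have hNbasis : (∀ ν, IsOpen (N ν) ∧ (1 : G ν) ∈ N ν) ∧
        ∀ᶠ ν in Filter.cofinite, N ν = (H ν : Set (G ν)) := by
      constructor
      · intro ν
        by_cases h : ν ∈ Iinf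
        · simp only [hNdef, if_pos h]
          exact ⟨isOpen_interior, mem_interior_iff_mem_nhds.2 (hCn ν)⟩
        · simp only [hNdef, if_neg h]
          exact ⟨hHopen ν h, (H ν).one_mem⟩
      · filter_upwards [hIinf.eventually_cofinite_notMem] with ν h
        simp only [hNdef, if_neg h]
    set U : Set (RestrictedProduct' G H) := {x | ∀ ν, x.toPi ν ∈ N ν} with hUdef
    have hU : U ∈ 𝓝 (1 : RestrictedProduct' G H) := hbasis.mem_of_mem hNbasis
    obtain ⟨t, ht⟩ := hc.elim_nhds_subcover' (fun g _ => (g * ·) '' U)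
      (fun g _ => by rw [← map_mul_left_nhds_one g]; exact Filter.image_mem_map hU)
    set D : ∀ ν, Set (G ν) := fun ν =>
      if ν ∈ Iinf then C ν else (H ν : Set (G ν)) with hDdef
    have hDc : ∀ ν, IsCompact (D ν) := by
      intro ν
      by_cases h : ν ∈ Iinf
      · simp only [hDdef, if_pos h]; exact hCc ν
      · simp only [hDdef, if_neg h]; exact hHcompact ν h
    have hND : ∀ ν, N ν ⊆ D ν := by
      intro ν
      by_cases h : ν ∈ Iinf
      · simp only [hNdef, hDdef, if_pos h]; exact interior_subset
      · simp only [hNdef, hDdef, if_neg h]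
        exact subset_rfl
    set T : Set I := Iinf ∪ ⋃ g ∈ t, {ν | (g : ↥(closure (Y : Set (RestrictedProduct' G H)))).1.toPi ν ∉ H ν}
      with hTdef
    have hTfin : T.Finite := by
      refine hIinf.union (Set.Finite.biUnion t.finite_toSet fun g _ => ?_)
      exact g.1.2
    refine ⟨fun ν => if ν ∈ T then ⋃ g ∈ t, ((g : ↥(closure (Y : Set (RestrictedProduct' G H)))).1.toPi ν * ·) '' D ν
        else (H ν : Set (G ν)), fun ν => ?_, ?_, ?_⟩
    · by_cases h : ν ∈ T
      · simp only [if_pos h]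
        exact t.finite_toSet.isCompact_biUnion fun g _ => (hDc ν).image (continuous_mul_left _)
      · simp only [if_neg h]
        exact hHcompact ν fun hν => h (Or.inl hν)
    · filter_upwards [hTfin.eventually_cofinite_notMem] with ν h
      simp only [if_neg h]
    · intro y hy ν
      obtain ⟨g, hgt, u, hu, huy⟩ : ∃ g ∈ t, ∃ u ∈ U,
          (g : ↥(closure (Y : Set (RestrictedProduct' G H)))).1 * u = y := by
        have := ht (subset_closure hy)
        simpa only [Set.mem_iUnion, Set.mem_image, exists_prop] using this
      by_cases h : ν ∈ T
      · simp only [if_pos h]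
        refine Set.mem_iUnion₂.2 ⟨g, hgt, ⟨u.toPi ν, hND ν (hu ν), ?_⟩⟩
        rw [← huy]; rfl
      · simp only [if_neg h]
        have hg : (g : ↥(closure (Y : Set (RestrictedProduct' G H)))).1.toPi ν ∈ H ν := by
          by_contra hgν
          exact h (Or.inr (Set.mem_iUnion₂.2 ⟨g, hgt, hgν⟩))
        have hu' : u.toPi ν ∈ H ν := by
          have := hu ν
          have hνI : ν ∉ Iinf := fun hν => h (Or.inl hν)
          simpa only [hNdef, if_neg hνI, SetLike.mem_coe] using this
        have : y.toPi ν = (g : ↥(closure (Y : Set (RestrictedProduct' G H)))).1.toPi ν * u.toPi ν := by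
          rw [← huy]; rfl
        rw [this]
        exact (H ν).mul_mem hg hu'
  · rintro ⟨K, hKc, hKH, hKY⟩
    haveI : CompactSpace ↥(Set.pi Set.univ K) :=
      isCompact_iff_compactSpace.1 (isCompact_univ_pi hKc)
    have hfmem : ∀ x : ↥(Set.pi Set.univ K), ∀ᶠ ν in Filter.cofinite, x.1 ν ∈ H ν := fun x => by
      filter_upwards [hKH] with ν h
      rw [← SetLike.mem_coe, ← h]
      exact x.2 ν (Set.mem_univ ν)
    have hf : Continuous (fun x : ↥(Set.pi Set.univ K) =>
        RestrictedProduct'.mk' x.1 (hfmem x)) := by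
      rw [continuous_iff_continuousAt]
      intro x₀
      show Filter.Tendsto _ (𝓝 x₀) (𝓝 (RestrictedProduct'.mk' x₀.1 (hfmem x₀)))
      rw [← map_mul_left_nhds_one (RestrictedProduct'.mk' x₀.1 (hfmem x₀))]
      rw [(hbasis.map (RestrictedProduct'.mk' x₀.1 (hfmem x₀) * ·)).tendsto_right_iff]
      rintro N ⟨hN1, hN2⟩
      have hS : ({ν | N ν ≠ (H ν : Set (G ν))} ∪ {ν | K ν ≠ (H ν : Set (G ν))}).Finite :=
        Set.Finite.union hN2 hKH
      have hnhds : ∀ᶠ x in 𝓝 x₀, ∀ ν ∈ hS.toFinset, (x₀.1 ν)⁻¹ * x.1 ν ∈ N ν := by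
        rw [Filter.eventually_all_finset]
        intro ν hν
        have hopen : IsOpen {a : G ν | (x₀.1 ν)⁻¹ * a ∈ N ν} :=
          (hN1 ν).1.preimage (continuous_mul_left _)
        have hmem : x₀ ∈ {x : ↥(Set.pi Set.univ K) | (x₀.1 ν)⁻¹ * x.1 ν ∈ N ν} := by
          show (x₀.1 ν)⁻¹ * x₀.1 ν ∈ N ν
          rw [inv_mul_cancel]
          exact (hN1 ν).2
        exact (hopen.preimage ((continuous_apply ν).comp continuous_subtype_val)).mem_nhds hmem
      filter_upwards [hnhds] with x hx
      refine ⟨(RestrictedProduct'.mk' x₀.1 (hfmem x₀))⁻¹ * RestrictedProduct'.mk' x.1 (hfmem x),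
        fun ν => ?_, mul_inv_cancel_left _ _⟩
      show (x₀.1 ν)⁻¹ * x.1 ν ∈ N ν
      by_cases h : ν ∈ hS.toFinset
      · exact hx ν h
      · rw [Set.Finite.mem_toFinset] at h
        simp only [Set.mem_union, Set.mem_setOf_eq, not_or, not_not] at h
        rw [h.1]
        have hx0 : x₀.1 ν ∈ H ν := by
          rw [← SetLike.mem_coe, ← h.2]; exact x₀.2 ν (Set.mem_univ ν)
        have hx1 : x.1 ν ∈ H ν := by
          rw [← SetLike.mem_coe, ← h.2]; exact x.2 ν (Set.mem_univ ν)
        exact (H ν).mul_mem ((H ν).inv_mem hx0) hx1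
    have hrange : Set.range (fun x : ↥(Set.pi Set.univ K) =>
        RestrictedProduct'.mk' x.1 (hfmem x)) =
        {x : RestrictedProduct' G H | ∀ ν, x.toPi ν ∈ K ν} := by
      ext x
      constructor
      · rintro ⟨z, rfl⟩ ν
        exact z.2 ν (Set.mem_univ ν)
      · intro hx
        exact ⟨⟨x.toPi, Set.mem_univ_pi.2 hx⟩, rfl⟩
    have hPc : IsCompact {x : RestrictedProduct' G H | ∀ ν, x.toPi ν ∈ K ν} :=
      hrange ▸ isCompact_range hf
    exact hPc.of_isClosed_subset isClosed_closure
      (closure_minimal (fun y hy ν => hKY y hy ν) hPc.isClosed)
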